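/- Let n ≥ 3, let U be a nonempty finite type, let d : U → ℝ be a probability distribution (d(u) ≥ 0 for all u and Σ_u d(u) = 1), let p_u be a positive probability vector on Fin n for each u ∈ U, and define f_d(i,j) = Σ_{u ∈ U} d(u) · p_u(i)/(p_u(i)+p_u(j)) for i ≠ j. Then for every k ≥ 3 and every injective y : Fin k → Fin n: Σ_{i=0}^{k−1} f_d(y(i), y(i+1 mod k)) < k − 1 (strict inequality). -/

import Mathlib

lemma rot_val {k : ℕ} (hk : 3 ≤ k) (i : Fin k) : (finRotate k i : ℕ) = (i.val + 1) % k := by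
  obtain ⟨m, rfl⟩ : ∃ m, k = m + 1 := ⟨k - 1, by omega⟩
  rw [finRotate_succ_apply, Fin.add_def]
  simp only [Fin.val_one']
  rw [Nat.mod_eq_of_lt (show 1 < m + 1 by omega)]

lemma nat1 {k a : ℕ} (hk : 3 ≤ k) (ha : a < k) : (a+1) % k ≠ a := by
  rcases Nat.lt_or_ge (a+1) k with h | h
  · rw [Nat.mod_eq_of_lt h]; omega
  · have : a + 1 = k := by omega
    rw [this, Nat.mod_self]; omega

lemma nat2 {k a : ℕ} (hk : 3 ≤ k) (ha : a < k) : ((a+1) % k + 1) % k ≠ a := by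
  rcases Nat.lt_or_ge (a+1) k with h | h
  · rw [Nat.mod_eq_of_lt h]
    rcases Nat.lt_or_ge (a+2) k with h2 | h2
    · rw [Nat.mod_eq_of_lt (by omega)]; omega
    · have : a + 1 + 1 = k := by omega
      rw [this, Nat.mod_self]; omega
  · have : (a + 1) = k := by omega
    rw [this, Nat.mod_self, Nat.mod_eq_of_lt (by omega)]; omega

lemma rot_ne {k : ℕ} (hk : 3 ≤ k) (i : Fin k) : finRotate k i ≠ i := by
  intro h
  exact nat1 hk i.isLt (by rw [← rot_val hk i, h])

lemma rot2_ne {k : ℕ} (hk : 3 ≤ k) (i : Fin k) : finRotate k (finRotate k i) ≠ i := by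
  intro h
  apply nat2 hk i.isLt
  rw [← rot_val hk i, ← rot_val hk (finRotate k i), h]

lemma cycle_lt {k : ℕ} (hk : 3 ≤ k) (x : Fin k → ℝ) (hx : ∀ i, 0 < x i) :
    ∑ i, x i / (x i + x (finRotate k i)) < (k : ℝ) - 1 := by
  have : NeZero k := ⟨by omega⟩
  set σ : Equiv.Perm (Fin k) := finRotate k with hσ
  have hd : ∀ i, 0 < x i + x (σ i) := fun i => add_pos (hx i) (hx (σ i))
  set T := ∑ i, x i with hT
  have hdT : ∀ i, x i + x (σ i) < T := by
    intro i
    have hne : i ≠ σ i := (rot_ne hk i).symm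
    have h2 : σ (σ i) ∉ ({i, σ i} : Finset (Fin k)) := by
      simp only [Finset.mem_insert, Finset.mem_singleton]
      push_neg
      exact ⟨rot2_ne hk i, rot_ne hk (σ i)⟩
    calc x i + x (σ i) = ∑ j ∈ ({i, σ i} : Finset _), x j := (Finset.sum_pair hne).symm
      _ < T := Finset.sum_lt_sum_of_subset (Finset.subset_univ _) (Finset.mem_univ _) h2
          (hx _) (fun j _ _ => (hx j).le)
  have hTpos : 0 < T := lt_trans (hd 0) (hdT 0)
  have key : 1 < ∑ i, x (σ i) / (x i + x (σ i)) := by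
    have h1 : ∑ i, x (σ i) / T < ∑ i, x (σ i) / (x i + x (σ i)) :=
      Finset.sum_lt_sum_of_nonempty Finset.univ_nonempty
        (fun i _ => div_lt_div_of_pos_left (hx (σ i)) (hd i) (hdT i))
    have hs : ∑ i, x (σ i) / T = 1 := by
      rw [← Finset.sum_div, Equiv.sum_comp σ x, ← hT, div_self hTpos.ne']
    linarith
  have heq : ∀ i, x i / (x i + x (σ i)) = 1 - x (σ i) / (x i + x (σ i)) := by
    intro i
    rw [eq_sub_iff_add_eq, ← add_div, div_self (hd i).ne']
  calc ∑ i, x i / (x i + x (σ i))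
      = ∑ i : Fin k, (1 - x (σ i) / (x i + x (σ i))) := Finset.sum_congr rfl fun i _ => heq i
    _ = (k : ℝ) - ∑ i, x (σ i) / (x i + x (σ i)) := by
        rw [Finset.sum_sub_distrib, Finset.sum_const, Finset.card_univ, Fintype.card_fin,
          nsmul_eq_mul, mul_one]
    _ < (k : ℝ) - 1 := by linarith

theorem expert_graph_strict_curl_condition (n : ℕ) (hn : 3 ≤ n)
    (U : Type) [Fintype U] [Nonempty U]
    (d : U → ℝ) (hd : ∀ u, 0 ≤ d u) (hdsum : ∑ u, d u = 1)
    (p : U → Fin n → ℝ) (hp : ∀ u i, 0 < p u i) (hpsum : ∀ u, ∑ i, p u i = 1)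
    (k : ℕ) (hk : 3 ≤ k) (y : Fin k → Fin n) (hy : Function.Injective y) :
    ∑ i : Fin k,
        (∑ u, d u * (p u (y i) / (p u (y i) + p u (y (finRotate k i)))))
      < (k : ℝ) - 1 := by
  rw [Finset.sum_comm]
  have hS : ∀ u, ∑ i : Fin k, p u (y i) / (p u (y i) + p u (y (finRotate k i))) < (k : ℝ) - 1 :=
    fun u => cycle_lt hk (fun i => p u (y i)) (fun i => hp u (y i))
  obtain ⟨u0, hu0⟩ : ∃ u, 0 < d u := by
    by_contra h
    push_neg at h
    have : ∑ u, d u ≤ 0 := Finset.sum_nonpos fun u _ => h u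
    linarith
  calc ∑ u, ∑ i : Fin k, d u * (p u (y i) / (p u (y i) + p u (y (finRotate k i))))
      = ∑ u, d u * ∑ i : Fin k, p u (y i) / (p u (y i) + p u (y (finRotate k i))) := by
        simp [Finset.mul_sum]
    _ < ∑ u, d u * ((k : ℝ) - 1) := by
        refine Finset.sum_lt_sum (fun u _ => ?_) ⟨u0, Finset.mem_univ _, ?_⟩
        · exact mul_le_mul_of_nonneg_left (hS u).le (hd u)
        · exact mul_lt_mul_of_pos_left (hS u0) hu0
    _ = (k : ℝ) - 1 := by rw [← Finset.sum_mul, hdsum, one_mul]
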